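/- For the Hamburger data, the matrix W_w(z) is the Hankel matrix with (k,l) entry b_{w,k+l}(z), where b_{w,m}(z) = z^m w(z) + Σ_{j=0}^{m-1} z^{m-1-j} s_j. -/

import Mathlib

open Matrix

theorem hamburger_Ww_is_hankel (n : ℕ) (hn : 1 ≤ n)
    (s : ℕ → ℝ)
    (A : Matrix (Fin (n + 1)) (Fin (n + 1)) ℂ)
    (hA : ∀ k l : Fin (n + 1), A k l = (s ((k : ℕ) + (l : ℕ)) : ℝ))
    (T : Matrix (Fin (n + 1)) (Fin (n + 1)) ℂ)
    (hT : ∀ k l : Fin (n + 1), T k l = if (k : ℕ) = (l : ℕ) + 1 then 1 else 0)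
    (u v : Matrix (Fin (n + 1)) (Fin 1) ℂ)
    (hu : ∀ (k : Fin (n + 1)) (i : Fin 1), u k i = if (k : ℕ) = 0 then 1 else 0)
    (hv : ∀ (k : Fin (n + 1)) (i : Fin 1),
      v k i = if (k : ℕ) = 0 then 0 else -(s ((k : ℕ) - 1) : ℝ))
    (z w : ℂ)
    (W : Matrix (Fin (n + 1)) (Fin (n + 1)) ℂ)
    (hW : W = T * (1 - z • T)⁻¹ * A - (1 - z • T)⁻¹ * u * vᴴ * (1 - z • Tᴴ)⁻¹ +
      w • ((1 - z • T)⁻¹ * u * uᴴ * (1 - z • Tᴴ)⁻¹))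
    (b : ℕ → ℂ)
    (hb : ∀ m : ℕ,
      b m = z ^ m * w + ∑ j ∈ Finset.range m, z ^ (m - 1 - j) * (s j : ℝ)) :
    ∀ k l : Fin (n + 1), W k l = b ((k : ℕ) + (l : ℕ)) := by
  classical
  set M : Matrix (Fin (n + 1)) (Fin (n + 1)) ℂ :=
    Matrix.of (fun a c : Fin (n + 1) =>
      if (c : ℕ) ≤ (a : ℕ) then z ^ ((a : ℕ) - (c : ℕ)) else 0) with hMdef
  have hMapp : ∀ a c : Fin (n + 1),
      M a c = if (c : ℕ) ≤ (a : ℕ) then z ^ ((a : ℕ) - (c : ℕ)) else 0 :=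
    fun a c => rfl
  -- M is a right inverse of 1 - z • T
  have hright : (1 - z • T) * M = 1 := by
    ext a c
    rw [Matrix.mul_apply]
    have hterm : ∀ m : Fin (n + 1),
        ((1 : Matrix (Fin (n + 1)) (Fin (n + 1)) ℂ) - z • T) a m * M m c
          = (if a = m then M m c else 0)
            - z * (if (a : ℕ) = (m : ℕ) + 1 then M m c else 0) := by
      intro m
      rw [Matrix.sub_apply, Matrix.smul_apply, Matrix.one_apply, hT]
      by_cases h1 : a = m <;> by_cases h2 : (a : ℕ) = (m : ℕ) + 1 <;>
        simp [h1, h2] <;> ring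
    rw [Finset.sum_congr rfl fun m _ => hterm m, Finset.sum_sub_distrib,
      ← Finset.mul_sum]
    rw [Finset.sum_ite_eq, if_pos (Finset.mem_univ a)]
    by_cases ha : (a : ℕ) = 0
    · have hz : ∑ m : Fin (n + 1), (if (a : ℕ) = (m : ℕ) + 1 then M m c else 0) = 0 :=
        Finset.sum_eq_zero fun m _ => if_neg (by omega)
      rw [hz, hMapp, Matrix.one_apply]
      by_cases hac : a = c
      · rw [if_pos hac, if_pos (by omega)]
        have : (a : ℕ) - (c : ℕ) = 0 := by omega
        rw [this, pow_zero]; ring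
      · have hac' : (a : ℕ) ≠ (c : ℕ) := fun h => hac (Fin.ext h)
        rw [if_neg hac, if_neg (by omega)]; ring
    · have ha' : (a : ℕ) - 1 < n + 1 := by omega
      have hsum : ∑ m : Fin (n + 1), (if (a : ℕ) = (m : ℕ) + 1 then M m c else 0)
          = M ⟨(a : ℕ) - 1, ha'⟩ c := by
        rw [Finset.sum_eq_single (⟨(a : ℕ) - 1, ha'⟩ : Fin (n + 1))]
        · rw [if_pos (by show (a : ℕ) = (a : ℕ) - 1 + 1; omega)]
        · intro m _ hm
          refine if_neg fun h => hm (Fin.ext ?_)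
          show (m : ℕ) = (a : ℕ) - 1
          omega
        · intro h; exact absurd (Finset.mem_univ _) h
      rw [hsum, hMapp, hMapp, Matrix.one_apply]
      simp only [Fin.ext_iff]
      show (if (c : ℕ) ≤ (a : ℕ) then z ^ ((a : ℕ) - (c : ℕ)) else 0)
          - z * (if (c : ℕ) ≤ (a : ℕ) - 1 then z ^ ((a : ℕ) - 1 - (c : ℕ)) else 0)
          = if (a : ℕ) = (c : ℕ) then 1 else 0
      split_ifs
      all_goals first
        | (exfalso; omega)
        | ring1
        | (rw [show (a : ℕ) - (c : ℕ) = ((a : ℕ) - 1 - (c : ℕ)) + 1 from by omega,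
            pow_succ]; ring1)
        | (rw [show (a : ℕ) - (c : ℕ) = 0 from by omega, pow_zero]; ring1)
  have hMinv : (1 - z • T)⁻¹ = M := Matrix.inv_eq_right_inv hright
  -- Tᴴ = Tᵀ since T is real
  have hTH : Tᴴ = Tᵀ := by
    ext a c
    rw [Matrix.conjTranspose_apply, Matrix.transpose_apply, hT]
    split_ifs <;> simp
  have hMinvT : (1 - z • Tᴴ)⁻¹ = Mᵀ := by
    have h1 : (1 : Matrix (Fin (n + 1)) (Fin (n + 1)) ℂ) - z • Tᴴ = (1 - z • T)ᵀ := by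
      rw [hTH, Matrix.transpose_sub, Matrix.transpose_smul, Matrix.transpose_one]
    rw [h1, ← Matrix.transpose_nonsing_inv, hMinv]
  -- shift times M
  have hTM : ∀ a m : Fin (n + 1),
      (T * M) a m = if (m : ℕ) + 1 ≤ (a : ℕ) then z ^ ((a : ℕ) - 1 - (m : ℕ)) else 0 := by
    intro a m
    rw [Matrix.mul_apply]
    by_cases ha : (a : ℕ) = 0
    · rw [Finset.sum_eq_zero fun p _ => by rw [hT, if_neg (by omega), zero_mul],
        if_neg (by omega)]
    · have ha' : (a : ℕ) - 1 < n + 1 := by omega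
      rw [Finset.sum_eq_single (⟨(a : ℕ) - 1, ha'⟩ : Fin (n + 1))]
      · rw [hT, if_pos (by show (a : ℕ) = (a : ℕ) - 1 + 1; omega), one_mul, hMapp]
        show (if (m : ℕ) ≤ (a : ℕ) - 1 then z ^ ((a : ℕ) - 1 - (m : ℕ)) else 0)
            = if (m : ℕ) + 1 ≤ (a : ℕ) then z ^ ((a : ℕ) - 1 - (m : ℕ)) else 0
        by_cases hm : (m : ℕ) + 1 ≤ (a : ℕ)
        · rw [if_pos (by omega), if_pos hm]
        · rw [if_neg (by omega), if_neg hm]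
      · intro p _ hp
        rw [hT, if_neg fun h => hp (Fin.ext (show (p : ℕ) = (a : ℕ) - 1 by omega)),
          zero_mul]
      · intro h; exact absurd (Finset.mem_univ _) h
  -- M * u has entries z^a
  have hMu : ∀ (a : Fin (n + 1)) (i : Fin 1), (M * u) a i = z ^ (a : ℕ) := by
    intro a i
    rw [Matrix.mul_apply]
    rw [Finset.sum_eq_single (0 : Fin (n + 1))]
    · rw [hu, hMapp]
      simp
    · intro p _ hp
      rw [hu, if_neg (show ¬ (p : ℕ) = 0 from fun h => hp (Fin.ext h)), mul_zero]
    · intro h; exact absurd (Finset.mem_univ _) h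
  intro k l
  rw [hW, hMinv, hMinvT]
  rw [Matrix.add_apply, Matrix.sub_apply, Matrix.smul_apply]
  -- entry formulas, as sums over ranges
  have h1 : (T * M * A) k l
      = ∑ m ∈ Finset.range (n + 1),
          (if m + 1 ≤ (k : ℕ) then z ^ ((k : ℕ) - 1 - m) else 0)
            * ((s (m + (l : ℕ)) : ℝ) : ℂ) := by
    rw [Matrix.mul_apply,
      ← Fin.sum_univ_eq_sum_range
        (fun m => (if m + 1 ≤ (k : ℕ) then z ^ ((k : ℕ) - 1 - m) else 0)
          * ((s (m + (l : ℕ)) : ℝ) : ℂ)) (n + 1)]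
    exact Finset.sum_congr rfl fun m _ => by rw [hTM, hA]
  have h2 : ((M : Matrix _ _ ℂ) * u * vᴴ * Mᵀ) k l
      = z ^ (k : ℕ) * ∑ m ∈ Finset.range (n + 1),
          (if m = 0 then 0 else -((s (m - 1) : ℝ) : ℂ))
            * (if m ≤ (l : ℕ) then z ^ ((l : ℕ) - m) else 0) := by
    rw [Matrix.mul_apply, Finset.mul_sum,
      ← Fin.sum_univ_eq_sum_range
        (fun m => z ^ (k : ℕ) * ((if m = 0 then 0 else -((s (m - 1) : ℝ) : ℂ))
          * (if m ≤ (l : ℕ) then z ^ ((l : ℕ) - m) else 0))) (n + 1)]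
    refine Finset.sum_congr rfl fun m _ => ?_
    rw [Matrix.transpose_apply, Matrix.mul_apply, Fin.sum_univ_one,
      Matrix.conjTranspose_apply, hMu, hv, hMapp]
    have hstar : star (((if (m : ℕ) = 0 then (0 : ℝ) else -s ((m : ℕ) - 1)) : ℝ) : ℂ)
        = if (m : ℕ) = 0 then (0 : ℂ) else -((s ((m : ℕ) - 1) : ℝ) : ℂ) := by
      rw [Complex.star_def, Complex.conj_ofReal]
      split_ifs <;> push_cast <;> ring
    rw [hstar]; ring
  have h3 : ((M : Matrix _ _ ℂ) * u * uᴴ * Mᵀ) k l = z ^ (k : ℕ) * z ^ (l : ℕ) := by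
    rw [Matrix.mul_apply]
    rw [Finset.sum_eq_single (0 : Fin (n + 1))]
    · rw [Matrix.transpose_apply, Matrix.mul_apply, Fin.sum_univ_one,
        Matrix.conjTranspose_apply, hMu, hu, hMapp]
      simp
    · intro p _ hp
      rw [Matrix.mul_apply, Fin.sum_univ_one, Matrix.conjTranspose_apply, hu,
        if_neg (show ¬ (p : ℕ) = 0 from fun h => hp (Fin.ext h))]
      simp
    · intro h; exact absurd (Finset.mem_univ _) h
  rw [h1, h2, h3, hb]
  -- now a purely arithmetic identity about the natural numbers (k:ℕ), (l:ℕ)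
  have key : ∀ p q : ℕ, p ≤ n → q ≤ n →
      (∑ m ∈ Finset.range (n + 1),
          (if m + 1 ≤ p then z ^ (p - 1 - m) else 0) * ((s (m + q) : ℝ) : ℂ))
        - z ^ p * ∑ m ∈ Finset.range (n + 1),
            (if m = 0 then 0 else -((s (m - 1) : ℝ) : ℂ))
              * (if m ≤ q then z ^ (q - m) else 0)
        + w * (z ^ p * z ^ q)
      = z ^ (p + q) * w + ∑ j ∈ Finset.range (p + q), z ^ (p + q - 1 - j) * ((s j : ℝ) : ℂ) := by
    intro p q hp hq
    have e1 : (∑ m ∈ Finset.range (n + 1),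
        (if m + 1 ≤ p then z ^ (p - 1 - m) else 0) * ((s (m + q) : ℝ) : ℂ))
        = ∑ m ∈ Finset.range p, z ^ (p - 1 - m) * ((s (m + q) : ℝ) : ℂ) := by
      have sub1 : (∑ m ∈ Finset.range p,
          (if m + 1 ≤ p then z ^ (p - 1 - m) else 0) * ((s (m + q) : ℝ) : ℂ))
          = ∑ m ∈ Finset.range (n + 1),
              (if m + 1 ≤ p then z ^ (p - 1 - m) else 0) * ((s (m + q) : ℝ) : ℂ) :=
        Finset.sum_subset (Finset.range_subset_range.2 (by omega))
          (fun x _ hx => by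
            rw [if_neg (by simp only [Finset.mem_range] at hx; omega), zero_mul])
      rw [← sub1]
      exact Finset.sum_congr rfl fun x hx => by
        rw [if_pos (by simp only [Finset.mem_range] at hx; omega)]
    have e2 : (∑ m ∈ Finset.range (n + 1),
        (if m = 0 then 0 else -((s (m - 1) : ℝ) : ℂ))
          * (if m ≤ q then z ^ (q - m) else 0))
        = -∑ j ∈ Finset.range q, z ^ (q - 1 - j) * ((s j : ℝ) : ℂ) := by
      have sub2 : (∑ m ∈ Finset.range (q + 1),
          (if m = 0 then 0 else -((s (m - 1) : ℝ) : ℂ))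
            * (if m ≤ q then z ^ (q - m) else 0))
          = ∑ m ∈ Finset.range (n + 1),
              (if m = 0 then 0 else -((s (m - 1) : ℝ) : ℂ))
                * (if m ≤ q then z ^ (q - m) else 0) :=
        Finset.sum_subset (Finset.range_subset_range.2 (by omega))
          (fun x _ hx => by
            rw [if_neg (show ¬ x ≤ q by simp only [Finset.mem_range] at hx; omega),
              mul_zero])
      rw [← sub2]
      rw [Finset.sum_range_succ']
      have hz : (if (0 : ℕ) = 0 then (0 : ℂ) else -((s (0 - 1) : ℝ) : ℂ))
          * (if (0 : ℕ) ≤ q then z ^ (q - 0) else 0) = 0 := by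
        rw [if_pos rfl, zero_mul]
      rw [hz, add_zero]
      rw [← Finset.sum_neg_distrib]
      refine Finset.sum_congr rfl fun i hi => ?_
      simp only [Finset.mem_range] at hi
      rw [if_neg (by omega), if_pos (by omega)]
      have : q - (i + 1) = q - 1 - i := by omega
      rw [this]
      push_cast
      ring
    have e3 : (∑ j ∈ Finset.range (p + q), z ^ (p + q - 1 - j) * ((s j : ℝ) : ℂ))
        = z ^ p * (∑ j ∈ Finset.range q, z ^ (q - 1 - j) * ((s j : ℝ) : ℂ))
          + ∑ m ∈ Finset.range p, z ^ (p - 1 - m) * ((s (m + q) : ℝ) : ℂ) := by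
      rw [show p + q = q + p from Nat.add_comm p q, Finset.sum_range_add, Finset.mul_sum]
      congr 1
      · refine Finset.sum_congr rfl fun j hj => ?_
        simp only [Finset.mem_range] at hj
        have : q + p - 1 - j = p + (q - 1 - j) := by omega
        rw [this, pow_add]; ring
      · refine Finset.sum_congr rfl fun i hi => ?_
        simp only [Finset.mem_range] at hi
        have h1 : q + p - 1 - (q + i) = p - 1 - i := by omega
        have h2 : q + i = i + q := Nat.add_comm q i
        rw [h1, h2]
    rw [e1, e2, e3, pow_add]
    ring
  exact key (k : ℕ) (l : ℕ) (Fin.is_le k) (Fin.is_le l)
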